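/- arXiv:0712.3432 — 4 statements merged into one kernel-verified Lean document; each statement's English description precedes it below -/
import Mathlib

section
/- Let T₁₁,…,T₁ₙ₁ > 0 and T₂₁,…,T₂ₙ₂ > 0 be real numbers and t₁ > 0. Define Y₁(t) = #{i ≤ n₁ : T₁ᵢ ≥ t}, Y₂(t) = #{i ≤ n₂ : T₂ᵢ ≥ t} for t ≤ t₁ and Y₂(t) = 0 for t > t₁, m₂ = #{i ≤ n₂ : T₂ᵢ ≤ t₁}, and for r > 0 set U(r) = m₂ − Σ_{i=1}^{n₁} 1{T₁ᵢ ≤ r t₁} · Y₂(T₁ᵢ/r)/(Y₁(T₁ᵢ) + Y₂(T₁ᵢ/r)) − Σ_{i : T₂ᵢ ≤ t₁} Y₂(T₂ᵢ)/(Y₁(r T₂ᵢ) + Y₂(T₂ᵢ)). Then U is a non-increasing function of r on (0,∞). -/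
open Set Finset

private lemma key_div_mono (a c c' : ℝ) (ha : 0 ≤ a) (hc : 0 ≤ c) (hc' : 0 ≤ c')
    (h : c ≤ c') : c / (a + c) ≤ c' / (a + c') := by
  rcases eq_or_lt_of_le (add_nonneg ha hc) with h0 | h0
  · have hc0 : c = 0 := by linarith
    rw [hc0]
    simp
    exact div_nonneg hc' (by linarith)
  · rw [div_le_div_iff₀ h0 (by linarith)]
    nlinarith

/-- The estimating function `U` for the scale parameter `r` of the AFT model is
non-increasing on `(0, ∞)`. -/
theorem estimating_function_antitone
    (n1 n2 : ℕ) (T1 : Fin n1 → ℝ) (T2 : Fin n2 → ℝ)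
    (hT1 : ∀ i, 0 < T1 i) (hT2 : ∀ i, 0 < T2 i)
    (t1 : ℝ) (ht1 : 0 < t1)
    (Y1 Y2 : ℝ → ℝ)
    (hY1 : ∀ t, Y1 t = ((Finset.univ.filter (fun i : Fin n1 => t ≤ T1 i)).card : ℝ))
    (hY2 : ∀ t, Y2 t =
      if t ≤ t1 then ((Finset.univ.filter (fun i : Fin n2 => t ≤ T2 i)).card : ℝ) else 0)
    (m2 : ℝ) (hm2 : m2 = ((Finset.univ.filter (fun i : Fin n2 => T2 i ≤ t1)).card : ℝ))
    (U : ℝ → ℝ)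
    (hU : ∀ r > (0:ℝ), U r = m2
      - (∑ i : Fin n1,
          if T1 i ≤ r * t1 then Y2 (T1 i / r) / (Y1 (T1 i) + Y2 (T1 i / r)) else 0)
      - (∑ i ∈ Finset.univ.filter (fun i : Fin n2 => T2 i ≤ t1),
          Y2 (T2 i) / (Y1 (r * T2 i) + Y2 (T2 i)))) :
    AntitoneOn U (Ioi (0:ℝ)) := by
  have hY1nn : ∀ t, 0 ≤ Y1 t := by intro t; rw [hY1]; positivity
  have hY2nn : ∀ t, 0 ≤ Y2 t := by
    intro t; rw [hY2]; split_ifs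
    · positivity
    · exact le_rfl
  have hY1mono : ∀ {a b : ℝ}, a ≤ b → Y1 b ≤ Y1 a := by
    intro a b hab
    rw [hY1, hY1]
    have : (Finset.univ.filter (fun i : Fin n1 => b ≤ T1 i)) ⊆
        (Finset.univ.filter (fun i : Fin n1 => a ≤ T1 i)) := by
      intro x hx
      simp only [Finset.mem_filter, Finset.mem_univ, true_and] at hx ⊢
      linarith
    exact_mod_cast Finset.card_le_card this
  have hY2mono : ∀ {a b : ℝ}, a ≤ b → Y2 b ≤ Y2 a := by
    intro a b hab
    rw [hY2, hY2]
    split_ifs with h1 h2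
    · have : (Finset.univ.filter (fun i : Fin n2 => b ≤ T2 i)) ⊆
          (Finset.univ.filter (fun i : Fin n2 => a ≤ T2 i)) := by
        intro x hx
        simp only [Finset.mem_filter, Finset.mem_univ, true_and] at hx ⊢
        linarith
      exact_mod_cast Finset.card_le_card this
    · exact absurd (hab.trans h1) h2
    · positivity
    · exact le_rfl
  intro r hr s hs hrs
  simp only [Set.mem_Ioi] at hr hs
  rw [hU r hr, hU s hs]
  have hA : (∑ i : Fin n1,
      if T1 i ≤ r * t1 then Y2 (T1 i / r) / (Y1 (T1 i) + Y2 (T1 i / r)) else 0) ≤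
      (∑ i : Fin n1,
      if T1 i ≤ s * t1 then Y2 (T1 i / s) / (Y1 (T1 i) + Y2 (T1 i / s)) else 0) := by
    apply Finset.sum_le_sum
    intro i _
    by_cases h : T1 i ≤ r * t1
    · have h' : T1 i ≤ s * t1 := h.trans (mul_le_mul_of_nonneg_right hrs ht1.le)
      rw [if_pos h, if_pos h']
      have hdiv : T1 i / s ≤ T1 i / r := div_le_div_of_nonneg_left (hT1 i).le hr hrs
      exact key_div_mono _ _ _ (hY1nn _) (hY2nn _) (hY2nn _) (hY2mono hdiv)
    · rw [if_neg h]
      split_ifs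
      · exact div_nonneg (hY2nn _) (add_nonneg (hY1nn _) (hY2nn _))
      · exact le_rfl
  have hB : (∑ i ∈ Finset.univ.filter (fun i : Fin n2 => T2 i ≤ t1),
      Y2 (T2 i) / (Y1 (r * T2 i) + Y2 (T2 i))) ≤
      (∑ i ∈ Finset.univ.filter (fun i : Fin n2 => T2 i ≤ t1),
      Y2 (T2 i) / (Y1 (s * T2 i) + Y2 (T2 i))) := by
    apply Finset.sum_le_sum
    intro i hi
    simp only [Finset.mem_filter, Finset.mem_univ, true_and] at hi
    have hc : (1:ℝ) ≤ Y2 (T2 i) := by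
      rw [hY2, if_pos hi]
      have : i ∈ Finset.univ.filter (fun j : Fin n2 => T2 i ≤ T2 j) := by
        simp
      have := Finset.card_pos.2 ⟨i, this⟩
      exact_mod_cast this
    apply div_le_div_of_nonneg_left (hY2nn _)
    · have := hY1nn (s * T2 i); linarith
    · have : r * T2 i ≤ s * T2 i := mul_le_mul_of_nonneg_right hrs (hT2 i).le
      have := hY1mono this
      linarith
  linarith
end

section
/- Let T₁₁,…,T₁ₙ₁ > 0 and T₂₁,…,T₂ₙ₂ > 0 with n₁ ≥ 1, n₂ ≥ 1, and t₁ > 0, and suppose at least one T₂ᵢ ≤ t₁. With Y₁, Y₂, m₂ and U(r) defined by Y₁(t) = #{i : T₁ᵢ ≥ t}, Y₂(t) = #{i : T₂ᵢ ≥ t} for t ≤ t₁ and 0 for t > t₁, m₂ = #{i : T₂ᵢ ≤ t₁}, U(r) = m₂ − Σ_{i=1}^{n₁} 1{T₁ᵢ ≤ rt₁} Y₂(T₁ᵢ/r)/(Y₁(T₁ᵢ)+Y₂(T₁ᵢ/r)) − Σ_{i : T₂ᵢ ≤ t₁} Y₂(T₂ᵢ)/(Y₁(rT₂ᵢ)+Y₂(T₂ᵢ)),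 the following hold: (i) for all sufficiently small r > 0, U(r) = m₂ − Σ_{i : T₂ᵢ ≤ t₁} Y₂(T₂ᵢ)/(n₁ + Y₂(T₂ᵢ)) > 0; (ii) for all sufficiently large r, U(r) = −Σ_{i=1}^{n₁} n₂/(Y₁(T₁ᵢ) + n₂) < 0. Consequently r̂ = sup{r > 0 : U(r) > 0} is finite and strictly positive. -/
open Set Finset

/-- The estimating function `U` satisfies `U(0+) > 0` and `U(+∞) < 0` with the
indicated closed forms, hence the estimator `r̂ = sup{r > 0 : U(r) > 0}` is a
well-defined finite strictly positive real number. -/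
theorem estimator_well_defined
    (n1 n2 : ℕ) (hn1 : 1 ≤ n1) (hn2 : 1 ≤ n2)
    (T1 : Fin n1 → ℝ) (T2 : Fin n2 → ℝ)
    (hT1 : ∀ i, 0 < T1 i) (hT2 : ∀ i, 0 < T2 i)
    (t1 : ℝ) (ht1 : 0 < t1)
    (hobs : ∃ i : Fin n2, T2 i ≤ t1)
    (Y1 Y2 : ℝ → ℝ)
    (hY1 : ∀ t, Y1 t = ((Finset.univ.filter (fun i : Fin n1 => t ≤ T1 i)).card : ℝ))
    (hY2 : ∀ t, Y2 t =
      if t ≤ t1 then ((Finset.univ.filter (fun i : Fin n2 => t ≤ T2 i)).card : ℝ) else 0)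
    (m2 : ℝ) (hm2 : m2 = ((Finset.univ.filter (fun i : Fin n2 => T2 i ≤ t1)).card : ℝ))
    (U : ℝ → ℝ)
    (hU : ∀ r > (0:ℝ), U r = m2
      - (∑ i : Fin n1,
          if T1 i ≤ r * t1 then Y2 (T1 i / r) / (Y1 (T1 i) + Y2 (T1 i / r)) else 0)
      - (∑ i ∈ Finset.univ.filter (fun i : Fin n2 => T2 i ≤ t1),
          Y2 (T2 i) / (Y1 (r * T2 i) + Y2 (T2 i)))) :
    (∃ ε > (0:ℝ), ∀ r ∈ Ioo (0:ℝ) ε,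
        U r = m2 - (∑ i ∈ Finset.univ.filter (fun i : Fin n2 => T2 i ≤ t1),
          Y2 (T2 i) / ((n1 : ℝ) + Y2 (T2 i))) ∧ 0 < U r) ∧
    (∃ R > (0:ℝ), ∀ r > R,
        U r = -(∑ i : Fin n1, (n2 : ℝ) / (Y1 (T1 i) + (n2 : ℝ))) ∧ U r < 0) ∧
    BddAbove {r : ℝ | 0 < r ∧ 0 < U r} ∧
    0 < sSup {r : ℝ | 0 < r ∧ 0 < U r} := by
  have hn1' : 0 < n1 := hn1
  have hn2' : 0 < n2 := hn2
  have hne1 : (Finset.univ : Finset (Fin n1)).Nonempty := ⟨⟨0, hn1'⟩, Finset.mem_univ _⟩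
  have hne2 : (Finset.univ : Finset (Fin n2)).Nonempty := ⟨⟨0, hn2'⟩, Finset.mem_univ _⟩
  set a := Finset.univ.inf' hne1 T1 with ha_def
  set M1 := Finset.univ.sup' hne1 T1 with hM1_def
  set mT2 := Finset.univ.inf' hne2 T2 with hmT2_def
  set M2 := Finset.univ.sup' hne2 T2 with hM2_def
  have hinf1 : ∀ i, a ≤ T1 i := fun i => Finset.inf'_le _ (Finset.mem_univ i)
  have hsup1 : ∀ i, T1 i ≤ M1 := fun i => Finset.le_sup' _ (Finset.mem_univ i)
  have hinf2 : ∀ i, mT2 ≤ T2 i := fun i => Finset.inf'_le _ (Finset.mem_univ i)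
  have hsup2 : ∀ i, T2 i ≤ M2 := fun i => Finset.le_sup' _ (Finset.mem_univ i)
  have ha : 0 < a := (Finset.lt_inf'_iff hne1).2 fun i _ => hT1 i
  have hM1 : 0 < M1 := ha.trans_le ((hinf1 ⟨0, hn1'⟩).trans (hsup1 ⟨0, hn1'⟩))
  have hmT2 : 0 < mT2 := (Finset.lt_inf'_iff hne2).2 fun i _ => hT2 i
  have hM2 : 0 < M2 := hmT2.trans_le ((hinf2 ⟨0, hn2'⟩).trans (hsup2 ⟨0, hn2'⟩))
  -- helper facts about Y1, Y2
  have hY1full : ∀ t, (∀ j, t ≤ T1 j) → Y1 t = (n1 : ℝ) := by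
    intro t ht
    rw [hY1, Finset.filter_true_of_mem fun x _ => ht x, Finset.card_univ, Fintype.card_fin]
  have hY1zero : ∀ t, (∀ j, T1 j < t) → Y1 t = 0 := by
    intro t ht
    rw [hY1, Finset.filter_false_of_mem fun x _ => not_le.2 (ht x), Finset.card_empty]
    norm_num
  have hY1nonneg : ∀ t, 0 ≤ Y1 t := by intro t; rw [hY1]; positivity
  have hY2full : ∀ t, t ≤ t1 → (∀ j, t ≤ T2 j) → Y2 t = (n2 : ℝ) := by
    intro t h h'
    rw [hY2, if_pos h, Finset.filter_true_of_mem fun x _ => h' x, Finset.card_univ,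
      Fintype.card_fin]
  have hY2nonneg : ∀ t, 0 ≤ Y2 t := by
    intro t; rw [hY2]; split <;> positivity
  have hY2pos : ∀ i : Fin n2, T2 i ≤ t1 → (1 : ℝ) ≤ Y2 (T2 i) := by
    intro i hi
    rw [hY2, if_pos hi]
    have h : 1 ≤ (Finset.univ.filter (fun j : Fin n2 => T2 i ≤ T2 j)).card :=
      Finset.card_pos.2 ⟨i, Finset.mem_filter.2 ⟨Finset.mem_univ i, le_refl _⟩⟩
    exact_mod_cast h
  set s := Finset.univ.filter (fun i : Fin n2 => T2 i ≤ t1) with hs_def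
  obtain ⟨i0, hi0⟩ := hobs
  have hsne : s.Nonempty := ⟨i0, Finset.mem_filter.2 ⟨Finset.mem_univ i0, hi0⟩⟩
  -- Part 1 : small r
  set ε := min (a / t1) (a / M2) with hε_def
  have hε : 0 < ε := lt_min (div_pos ha ht1) (div_pos ha hM2)
  have hsmall : ∀ r ∈ Ioo (0:ℝ) ε,
      U r = m2 - (∑ i ∈ s, Y2 (T2 i) / ((n1 : ℝ) + Y2 (T2 i))) ∧ 0 < U r := by
    rintro r ⟨hr0, hrε⟩
    have h1 : ∀ i : Fin n1, ¬ T1 i ≤ r * t1 := by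
      intro i
      exact not_le.2 (((lt_div_iff₀ ht1).1 (hrε.trans_le (min_le_left _ _))).trans_le (hinf1 i))
    have h2 : ∀ i : Fin n2, Y1 (r * T2 i) = (n1 : ℝ) := by
      intro i
      refine hY1full _ fun j => ?_
      have hra : r * M2 < a := (lt_div_iff₀ hM2).1 (hrε.trans_le (min_le_right _ _))
      have : r * T2 i ≤ r * M2 := by
        have := hsup2 i; nlinarith
      exact (this.trans_lt hra).le.trans (hinf1 j)
    have hform : U r = m2 - (∑ i ∈ s, Y2 (T2 i) / ((n1 : ℝ) + Y2 (T2 i))) := by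
      rw [hU r hr0]
      have e1 : (∑ i : Fin n1,
          if T1 i ≤ r * t1 then Y2 (T1 i / r) / (Y1 (T1 i) + Y2 (T1 i / r)) else 0) = 0 :=
        Finset.sum_eq_zero fun i _ => if_neg (h1 i)
      have e2 : (∑ i ∈ s, Y2 (T2 i) / (Y1 (r * T2 i) + Y2 (T2 i)))
          = ∑ i ∈ s, Y2 (T2 i) / ((n1 : ℝ) + Y2 (T2 i)) :=
        Finset.sum_congr rfl fun i _ => by rw [h2 i]
      rw [e1, e2]; ring
    refine ⟨hform, ?_⟩
    rw [hform, sub_pos, hm2]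
    have hlt : (∑ i ∈ s, Y2 (T2 i) / ((n1 : ℝ) + Y2 (T2 i))) < ∑ _i ∈ s, (1 : ℝ) := by
      refine Finset.sum_lt_sum_of_nonempty hsne fun i hi => ?_
      have hpos : (0 : ℝ) < (n1 : ℝ) + Y2 (T2 i) := by
        have := hY2nonneg (T2 i)
        have : (0:ℝ) < (n1:ℝ) := by exact_mod_cast hn1'
        linarith [hY2nonneg (T2 i)]
      rw [div_lt_one hpos]
      have : (0:ℝ) < (n1:ℝ) := by exact_mod_cast hn1'
      linarith
    calc (∑ i ∈ s, Y2 (T2 i) / ((n1 : ℝ) + Y2 (T2 i))) < ∑ _i ∈ s, (1:ℝ) := hlt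
      _ = (s.card : ℝ) := by rw [Finset.sum_const, nsmul_eq_mul, mul_one]
  -- Part 2 : large r
  set R := max (M1 / t1) (M1 / mT2) with hR_def
  have hR : 0 < R := lt_max_iff.2 (Or.inl (div_pos hM1 ht1))
  have hbig : ∀ r > R, U r = -(∑ i : Fin n1, (n2 : ℝ) / (Y1 (T1 i) + (n2 : ℝ))) ∧ U r < 0 := by
    intro r hr
    have hr0 : 0 < r := hR.trans hr
    have hM1r : M1 < r * t1 := (div_lt_iff₀ ht1).1 ((le_max_left _ _).trans_lt hr)
    have hM1r2 : M1 < r * mT2 := (div_lt_iff₀ hmT2).1 ((le_max_right _ _).trans_lt hr)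
    have hA : ∀ i : Fin n1, T1 i ≤ r * t1 := fun i => (hsup1 i).trans hM1r.le
    have hB : ∀ i : Fin n1, T1 i / r ≤ t1 := by
      intro i
      rw [div_le_iff₀ hr0]
      nlinarith [hsup1 i]
    have hC : ∀ (i : Fin n1) (j : Fin n2), T1 i / r ≤ T2 j := by
      intro i j
      rw [div_le_iff₀ hr0]
      nlinarith [hsup1 i, hinf2 j]
    have hD : ∀ i : Fin n1, Y2 (T1 i / r) = (n2 : ℝ) := fun i => hY2full _ (hB i) (hC i)
    have hE : ∀ i : Fin n2, Y1 (r * T2 i) = 0 := by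
      intro i
      refine hY1zero _ fun j => ?_
      nlinarith [hsup1 j, hinf2 i]
    have hform : U r = -(∑ i : Fin n1, (n2 : ℝ) / (Y1 (T1 i) + (n2 : ℝ))) := by
      rw [hU r hr0]
      have e1 : (∑ i : Fin n1,
          if T1 i ≤ r * t1 then Y2 (T1 i / r) / (Y1 (T1 i) + Y2 (T1 i / r)) else 0)
          = ∑ i : Fin n1, (n2 : ℝ) / (Y1 (T1 i) + (n2 : ℝ)) :=
        Finset.sum_congr rfl fun i _ => by rw [if_pos (hA i), hD i]
      have e2 : (∑ i ∈ s, Y2 (T2 i) / (Y1 (r * T2 i) + Y2 (T2 i))) = m2 := by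
        rw [hm2]
        have : ∀ i ∈ s, Y2 (T2 i) / (Y1 (r * T2 i) + Y2 (T2 i)) = 1 := by
          intro i hi
          have hi' : T2 i ≤ t1 := (Finset.mem_filter.1 hi).2
          rw [hE i, zero_add, div_self]
          have := hY2pos i hi'
          linarith
        rw [Finset.sum_congr rfl this, Finset.sum_const, nsmul_eq_mul, mul_one]
      rw [e1, e2]; ring
    refine ⟨hform, ?_⟩
    rw [hform, neg_lt, neg_zero]
    refine Finset.sum_pos (fun i _ => div_pos ?_ ?_) hne1
    · exact_mod_cast hn2'
    · have h1 := hY1nonneg (T1 i)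
      have h2 : (0:ℝ) < (n2:ℝ) := by exact_mod_cast hn2'
      linarith
  -- bounded above
  have hbdd : BddAbove {r : ℝ | 0 < r ∧ 0 < U r} := by
    refine ⟨R, fun r hr => ?_⟩
    by_contra h
    push_neg at h
    exact absurd (hbig r h).2 (not_lt.2 hr.2.le)
  refine ⟨⟨ε, hε, hsmall⟩, ⟨R, hR, hbig⟩, hbdd, ?_⟩
  have hmem : ε / 2 ∈ {r : ℝ | 0 < r ∧ 0 < U r} :=
    ⟨half_pos hε, (hsmall (ε / 2) ⟨half_pos hε, half_lt_self hε⟩).2⟩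
  exact lt_of_lt_of_le (half_pos hε) (le_csSup hbdd hmem)
end

section
/- Let g : [0,∞) → [0,∞) be continuously differentiable and strictly increasing with g(0) = 0, let f₁ be a continuous probability density on [0,∞) with c.d.f. F₁(t) = ∫₀^t f₁(u) du satisfying ∫₀^∞ (1 − F₁(t)) dt < ∞, and set F₂(y) = F₁(g(y)). Let U : [0,∞) → ℝ be continuously differentiable with U(0) = 0 and compact support. Then ∫₀^∞ (∫₀^t F₁(t + g(y) − y) U'(y) dy) dt = ∫₀^∞ U(y) (F₂(y) − (g'(y) − 1)(1 − F₂(y))) dy. -/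
open MeasureTheory Set

/-- Integration-by-parts identity used in Theorems 1 and 2 of the paper:
`∫₀^∞ ∫₀^t F₁(t + g(y) − y) U'(y) dy dt
  = ∫₀^∞ U(y) (F₂(y) − (g'(y) − 1)(1 − F₂(y))) dy`
with `F₂ = F₁ ∘ g`. -/
theorem integration_by_parts_identity
    (g : ℝ → ℝ) (hg : ContDiff ℝ 1 g)
    (hgmono : StrictMonoOn g (Ici (0:ℝ))) (hg0 : g 0 = 0)
    (f1 : ℝ → ℝ) (hf1c : Continuous f1) (hf1nn : ∀ u, 0 ≤ f1 u)
    (hf1int : IntegrableOn f1 (Ioi (0:ℝ))) (hf1norm : ∫ u in Ioi (0:ℝ), f1 u = 1)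
    (F1 : ℝ → ℝ) (hF1 : ∀ t, F1 t = ∫ u in (0:ℝ)..t, f1 u)
    (htail : IntegrableOn (fun t => 1 - F1 t) (Ioi (0:ℝ)))
    (F2 : ℝ → ℝ) (hF2 : ∀ y, F2 y = F1 (g y))
    (U : ℝ → ℝ) (hU : ContDiff ℝ 1 U) (hU0 : U 0 = 0)
    (hUsupp : HasCompactSupport U) :
    ∫ t in Ioi (0:ℝ), (∫ y in (0:ℝ)..t, F1 (t + g y - y) * deriv U y)
      = ∫ y in Ioi (0:ℝ), U y * (F2 y - (deriv g y - 1) * (1 - F2 y)) := by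
  -- basic continuity facts
  have hUc : Continuous U := hU.continuous
  have hU'c : Continuous (deriv U) := hU.continuous_deriv le_rfl
  have hgc : Continuous g := hg.continuous
  have hg'c : Continuous (deriv g) := hg.continuous_deriv le_rfl
  have hgd : ∀ y, HasDerivAt g (deriv g y) y := fun y =>
    ((hg.differentiable one_ne_zero) y).hasDerivAt
  have hF1c : Continuous F1 := by
    have h2 : F1 = fun t => ∫ u in (0:ℝ)..t, f1 u := funext hF1
    rw [h2]
    exact intervalIntegral.continuous_primitive (fun a b => hf1c.intervalIntegrable a b) 0
  have hF1mono : Monotone F1 := by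
    intro a b hab
    have h3 : F1 a + ∫ u in a..b, f1 u = F1 b := by
      rw [hF1 a, hF1 b]
      exact intervalIntegral.integral_add_adjacent_intervals
        (hf1c.intervalIntegrable 0 a) (hf1c.intervalIntegrable a b)
    have h4 : 0 ≤ ∫ u in a..b, f1 u :=
      intervalIntegral.integral_nonneg hab (fun u _ => hf1nn u)
    linarith
  have hF10 : F1 0 = 0 := by rw [hF1 0, intervalIntegral.integral_same]
  have hF1nn : ∀ t, 0 ≤ t → 0 ≤ F1 t := by
    intro t ht
    rw [← hF10]; exact hF1mono ht
  have hF1le1 : ∀ t, F1 t ≤ 1 := by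
    intro t
    rcases le_or_gt t 0 with h | h
    · have := hF1mono h
      rw [hF10] at this
      linarith
    · rw [hF1 t, intervalIntegral.integral_of_le h.le, ← hf1norm]
      refine setIntegral_mono_set hf1int ?_ ?_
      · exact Filter.Eventually.of_forall fun u => hf1nn u
      · exact HasSubset.Subset.eventuallyLE Ioc_subset_Ioi_self
  have hwc : Continuous (fun t => 1 - F1 t) := continuous_const.sub hF1c
  have hwnn : ∀ t, 0 ≤ 1 - F1 t := fun t => by linarith [hF1le1 t]
  -- g is nonnegative on [0, ∞)
  have hgnn : ∀ y, 0 ≤ y → 0 ≤ g y := by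
    intro y hy
    rcases eq_or_lt_of_le hy with h | h
    · rw [← h, hg0]
    · rw [← hg0]
      exact (hgmono (self_mem_Ici) hy h).le
  -- support bound M
  obtain ⟨r, hr⟩ := hUsupp.isBounded.subset_closedBall 0
  set M : ℝ := max r 0 + 1 with hMdef
  have hM0 : 0 < M := by positivity
  have hnm : ∀ y, M ≤ y → y ∉ tsupport U := by
    intro y hy hmem
    have := hr hmem
    rw [Real.closedBall_eq_Icc] at this
    have h1 : y ≤ r := by linarith [this.2]
    have h2 : r ≤ max r 0 := le_max_left r 0
    linarith
  have hUM : ∀ y, M ≤ y → U y = 0 := fun y hy =>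
    image_eq_zero_of_notMem_tsupport (hnm y hy)
  have hU'M : ∀ y, M ≤ y → deriv U y = 0 := by
    intro y hy
    by_contra h
    exact hnm y hy (support_deriv_subset h)
  -- the tail function G
  set K : ℝ := ∫ t in Ioi (0:ℝ), (1 - F1 t) with hK
  set G : ℝ → ℝ := fun s => K - ∫ t in (0:ℝ)..s, (1 - F1 t) with hGdef
  have hGc : Continuous G := continuous_const.sub
    (intervalIntegral.continuous_primitive (fun a b => hwc.intervalIntegrable a b) 0)
  have hGder : ∀ s, HasDerivAt G (-(1 - F1 s)) s := by
    intro s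
    have h1 : HasDerivAt (fun s => ∫ t in (0:ℝ)..s, (1 - F1 t)) (1 - F1 s) s :=
      intervalIntegral.integral_hasDerivAt_right (hwc.intervalIntegrable 0 s)
        (hwc.stronglyMeasurableAtFilter _ _) hwc.continuousAt
    have h3 := (hasDerivAt_const s K).sub h1
    rw [zero_sub] at h3
    exact h3
  have hGeq : ∀ s, 0 ≤ s → G s = ∫ t in Ioi s, (1 - F1 t) := by
    intro s hs
    have hsplit : (∫ t in Ioi (0:ℝ), (1 - F1 t))
        = (∫ t in Ioc (0:ℝ) s, (1 - F1 t)) + ∫ t in Ioi s, (1 - F1 t) := by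
      rw [← setIntegral_union (Ioc_disjoint_Ioi le_rfl) measurableSet_Ioi
        (htail.mono_set Ioc_subset_Ioi_self) (htail.mono_set (Ioi_subset_Ioi hs)),
        Ioc_union_Ioi_eq_Ioi hs]
    have h5 : G s = K - ∫ t in (0:ℝ)..s, (1 - F1 t) := rfl
    rw [h5, intervalIntegral.integral_of_le hs, hK, hsplit]
    ring
  -- the two-variable integrand
  set h2 : ℝ → ℝ → ℝ := fun t y => (1 - F1 (t + g y - y)) * deriv U y with hh2def
  set H : ℝ → ℝ → ℝ := fun t y => Set.indicator (Iio t) (fun y' => h2 t y') y with hHdef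
  have hh2cont : Continuous (fun p : ℝ × ℝ => h2 p.1 p.2) := by
    exact (continuous_const.sub (hF1c.comp
      ((continuous_fst.add (hgc.comp continuous_snd)).sub continuous_snd))).mul
      (hU'c.comp continuous_snd)
  have hHmeas : AEStronglyMeasurable (Function.uncurry H)
      ((volume.restrict (Ioi (0:ℝ))).prod (volume.restrict (Ioi (0:ℝ)))) := by
    have heq : Function.uncurry H
        = Set.indicator {p : ℝ × ℝ | p.2 < p.1} (fun p => h2 p.1 p.2) := by
      funext p
      rcases p with ⟨t, y⟩
      rw [Function.uncurry_apply_pair]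
      simp only [hHdef, Set.indicator_apply, mem_Iio, Set.mem_setOf_eq]
    rw [heq]
    exact (hh2cont.aestronglyMeasurable).indicator
      (measurableSet_lt measurable_snd measurable_fst)
  -- the dominating function
  obtain ⟨C, hC⟩ := (hUsupp.deriv).exists_bound_of_continuous hU'c
  have hC0 : 0 ≤ C := le_trans (norm_nonneg _) (hC 0)
  set φ : ℝ → ℝ := indicator (Ioi M) (fun s => 1 - F1 s) with hφdef
  have hφint : Integrable φ := (integrable_indicator_iff measurableSet_Ioi).mpr
    (htail.mono_set (Ioi_subset_Ioi hM0.le))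
  have hφnn : ∀ s, 0 ≤ φ s := indicator_nonneg (fun s _ => hwnn s)
  set ψ : ℝ → ℝ := fun t => indicator (Ioc 0 (2*M)) (fun _ => (1:ℝ)) t + φ (t - M) with hψdef
  have hψint : Integrable ψ := by
    refine Integrable.add ?_ (hφint.comp_sub_right M)
    exact (integrable_indicator_iff measurableSet_Ioc).mpr
      (integrableOn_const measure_Ioc_lt_top.ne)
  have hψnn : ∀ t, 0 ≤ ψ t := fun t =>
    add_nonneg (indicator_nonneg (fun _ _ => zero_le_one) t) (hφnn (t - M))
  set Bnd : ℝ × ℝ → ℝ := fun p => ψ p.1 * (C * indicator (Ioc (0:ℝ) M) (fun _ => (1:ℝ)) p.2)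
    with hBnddef
  have hBint : Integrable Bnd ((volume.restrict (Ioi (0:ℝ))).prod (volume.restrict (Ioi (0:ℝ)))) := by
    have h1 : IntegrableOn ψ (Ioi (0:ℝ)) := hψint.integrableOn
    have h2' : IntegrableOn (fun y => C * indicator (Ioc (0:ℝ) M) (fun _ => (1:ℝ)) y)
        (Ioi (0:ℝ)) :=
      (((integrable_indicator_iff measurableSet_Ioc).mpr
        (integrableOn_const measure_Ioc_lt_top.ne)).const_mul C).integrableOn
    exact Integrable.mul_prod h1 h2'
  have hbound : ∀ᵐ p ∂((volume.restrict (Ioi (0:ℝ))).prod (volume.restrict (Ioi (0:ℝ)))),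
      ‖Function.uncurry H p‖ ≤ Bnd p := by
    rw [Measure.prod_restrict]
    filter_upwards [ae_restrict_mem (measurableSet_Ioi.prod measurableSet_Ioi)] with p hp
    rcases p with ⟨t, y⟩
    obtain ⟨ht, hy⟩ : t ∈ Ioi (0:ℝ) ∧ y ∈ Ioi (0:ℝ) := hp
    rw [Function.uncurry_apply_pair]
    have hBnn : 0 ≤ Bnd (t, y) := by
      refine mul_nonneg (hψnn t) (mul_nonneg hC0 ?_)
      exact indicator_nonneg (fun _ _ => zero_le_one) y
    by_cases hyt : y < t
    · -- y ∈ Iio t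
      have hH : H t y = h2 t y := by
        simp only [hHdef, Set.indicator_apply, mem_Iio, if_pos hyt]
      rw [hH]
      by_cases hyM : y ≤ M
      · -- the main case
        have hymem : y ∈ Ioc (0:ℝ) M := ⟨hy, hyM⟩
        have hind : indicator (Ioc (0:ℝ) M) (fun _ => (1:ℝ)) y = 1 :=
          indicator_of_mem hymem _
        have harg : 0 ≤ t + g y - y := by
          have h6 := hgnn y (le_of_lt hy)
          have h7 : (0:ℝ) < t - y := by
            have : y < t := hyt
            linarith
          linarith
        have hnorm : ‖h2 t y‖ = (1 - F1 (t + g y - y)) * ‖deriv U y‖ := by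
          have h8 : h2 t y = (1 - F1 (t + g y - y)) * deriv U y := rfl
          rw [h8, norm_mul, Real.norm_eq_abs (1 - F1 (t + g y - y)),
            abs_of_nonneg (hwnn _)]
        have hkey : 1 - F1 (t + g y - y) ≤ ψ t := by
          rcases le_or_gt t (2*M) with h2M | h2M
          · have htmem : t ∈ Ioc (0:ℝ) (2*M) := ⟨ht, h2M⟩
            have hind2 : indicator (Ioc (0:ℝ) (2*M)) (fun _ => (1:ℝ)) t = 1 :=
              indicator_of_mem htmem _
            have h9 : ψ t = 1 + φ (t - M) := by
              rw [hψdef]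
              simp only []
              rw [hind2]
            rw [h9]
            have := hF1nn (t + g y - y) harg
            linarith [hφnn (t - M)]
          · have hind2 : indicator (Ioc (0:ℝ) (2*M)) (fun _ => (1:ℝ)) t = 0 :=
              indicator_of_notMem (fun hmem => absurd hmem.2 (not_le.mpr h2M)) _
            have htM : t - M ∈ Ioi M := by
              rw [mem_Ioi]; linarith
            have hφval : φ (t - M) = 1 - F1 (t - M) := indicator_of_mem htM _
            have hψval : ψ t = 1 - F1 (t - M) := by
              rw [hψdef]
              simp only []
              rw [hind2, hφval]
              ring
            rw [hψval]
            have hmono := hF1mono (show t - M ≤ t + g y - y by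
              have := hgnn y (le_of_lt hy); linarith)
            linarith
        rw [hnorm]
        have hBval : Bnd (t, y) = ψ t * C := by
          have h10 : Bnd (t, y) = ψ t * (C * indicator (Ioc (0:ℝ) M) (fun _ => (1:ℝ)) y) := rfl
          rw [h10, hind, mul_one]
        rw [hBval]
        exact mul_le_mul hkey (hC y) (norm_nonneg _) (hψnn t)
      · -- y > M: deriv U y = 0
        have hz : deriv U y = 0 := hU'M y (le_of_lt (not_le.mp hyM))
        have hH0 : h2 t y = 0 := by
          have h8 : h2 t y = (1 - F1 (t + g y - y)) * deriv U y := rfl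
          rw [h8, hz, mul_zero]
        rw [hH0, norm_zero]
        exact hBnn
    · have hH : H t y = 0 := by
        simp only [hHdef, Set.indicator_apply, mem_Iio, if_neg hyt]
      rw [hH, norm_zero]
      exact hBnn
  have hHint : Integrable (Function.uncurry H)
      ((volume.restrict (Ioi (0:ℝ))).prod (volume.restrict (Ioi (0:ℝ)))) :=
    Integrable.mono' hBint hHmeas hbound
  -- Fubini
  have hswap : (∫ t in Ioi (0:ℝ), ∫ y in Ioi (0:ℝ), H t y)
      = ∫ y in Ioi (0:ℝ), ∫ t in Ioi (0:ℝ), H t y :=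
    integral_integral_swap hHint
  -- inner y-integral
  have hinner : ∀ t ∈ Ioi (0:ℝ), (∫ y in Ioi (0:ℝ), H t y) = ∫ y in (0:ℝ)..t, h2 t y := by
    intro t ht
    have h11 : (∫ y in Ioi (0:ℝ), H t y)
        = ∫ y in Iio t, h2 t y ∂(volume.restrict (Ioi (0:ℝ))) :=
      integral_indicator measurableSet_Iio
    rw [h11, Measure.restrict_restrict measurableSet_Iio, Iio_inter_Ioi,
      intervalIntegral.integral_of_le (le_of_lt ht), integral_Ioc_eq_integral_Ioo]
  -- inner t-integral
  have htrans : ∀ (a c : ℝ), (∫ t in Ioi a, (1 - F1 (t + c))) = ∫ s in Ioi (a + c), (1 - F1 s) := by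
    intro a c
    rw [← integral_indicator measurableSet_Ioi, ← integral_indicator measurableSet_Ioi,
      ← integral_add_right_eq_self (fun s => indicator (Ioi (a+c)) (fun s' => 1 - F1 s') s) c]
    congr 1
    funext t
    simp only [indicator_apply, mem_Ioi]
    by_cases h : a < t
    · rw [if_pos h, if_pos (by linarith)]
    · rw [if_neg h, if_neg (fun hc => h (by linarith))]
  have hinner2 : ∀ y ∈ Ioi (0:ℝ), (∫ t in Ioi (0:ℝ), H t y) = G (g y) * deriv U y := by
    intro y hy
    have hyswap : (fun t => H t y) = indicator (Ioi y) (fun t => h2 t y) := by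
      funext t
      simp only [hHdef, Set.indicator_apply, mem_Iio, mem_Ioi]
    rw [hyswap, integral_indicator measurableSet_Ioi,
      Measure.restrict_restrict measurableSet_Ioi, Ioi_inter_Ioi,
      max_eq_left (le_of_lt hy)]
    have h12 : (∫ t in Ioi y, h2 t y)
        = (∫ t in Ioi y, (1 - F1 (t + (g y - y)))) * deriv U y := by
      rw [← integral_mul_const]
      congr 1
      funext t
      have h8 : h2 t y = (1 - F1 (t + g y - y)) * deriv U y := rfl
      rw [h8, add_sub_assoc]
    rw [h12, htrans y (g y - y)]
    congr 1
    rw [hGeq (g y) (hgnn y (le_of_lt hy))]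
    congr 1
    ring
  -- split the original inner integral
  have hsplit : ∀ t : ℝ, (∫ y in (0:ℝ)..t, F1 (t + g y - y) * deriv U y)
      = U t - ∫ y in (0:ℝ)..t, h2 t y := by
    intro t
    have hcont1 : Continuous (fun y => F1 (t + g y - y)) :=
      hF1c.comp ((continuous_const.add hgc).sub continuous_id)
    have e1 : (∫ y in (0:ℝ)..t, F1 (t + g y - y) * deriv U y)
        = (∫ y in (0:ℝ)..t, deriv U y) - ∫ y in (0:ℝ)..t, h2 t y := by
      rw [← intervalIntegral.integral_sub (hU'c.intervalIntegrable 0 t)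
        ((show Continuous (fun y => h2 t y) from (continuous_const.sub hcont1).mul hU'c).intervalIntegrable 0 t)]
      apply intervalIntegral.integral_congr
      intro y _
      simp only []
      ring
    rw [e1, intervalIntegral.integral_deriv_eq_sub
      (fun x _ => (hU.differentiable one_ne_zero) x) (hU'c.intervalIntegrable 0 t), hU0, sub_zero]
  -- integrability of the pieces
  have hUint : IntegrableOn U (Ioi (0:ℝ)) :=
    (hUc.integrable_of_hasCompactSupport hUsupp).integrableOn
  have hBfunint : IntegrableOn (fun t => ∫ y in (0:ℝ)..t, h2 t y) (Ioi (0:ℝ)) := by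
    refine (hHint.integral_prod_left).congr ?_
    filter_upwards [ae_restrict_mem measurableSet_Ioi] with t ht
    exact hinner t ht
  -- compute the LHS
  have hLHS1 : (∫ t in Ioi (0:ℝ), (∫ y in (0:ℝ)..t, F1 (t + g y - y) * deriv U y))
      = (∫ t in Ioi (0:ℝ), U t) - ∫ t in Ioi (0:ℝ), (∫ y in (0:ℝ)..t, h2 t y) := by
    rw [← integral_sub hUint hBfunint]
    exact setIntegral_congr_fun measurableSet_Ioi (fun t _ => hsplit t)
  have hLHS2 : (∫ t in Ioi (0:ℝ), (∫ y in (0:ℝ)..t, h2 t y))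
      = ∫ y in Ioi (0:ℝ), G (g y) * deriv U y := by
    have e1 : (∫ t in Ioi (0:ℝ), (∫ y in (0:ℝ)..t, h2 t y))
        = ∫ t in Ioi (0:ℝ), ∫ y in Ioi (0:ℝ), H t y :=
      setIntegral_congr_fun measurableSet_Ioi (fun t ht => (hinner t ht).symm)
    have e2 : (∫ y in Ioi (0:ℝ), ∫ t in Ioi (0:ℝ), H t y)
        = ∫ y in Ioi (0:ℝ), G (g y) * deriv U y :=
      setIntegral_congr_fun measurableSet_Ioi (fun y hy => hinner2 y hy)
    rw [e1, hswap, e2]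
  -- truncation helper
  have htrunc : ∀ h : ℝ → ℝ, Continuous h → (∀ y, M ≤ y → h y = 0) →
      (∫ y in Ioi (0:ℝ), h y) = ∫ y in (0:ℝ)..M, h y := by
    intro h hc h0
    have hsplit2 : (∫ y in Ioi (0:ℝ), h y) = (∫ y in Ioc (0:ℝ) M, h y) + ∫ y in Ioi M, h y := by
      rw [← setIntegral_union (Ioc_disjoint_Ioi le_rfl) measurableSet_Ioi
        (hc.integrableOn_Ioc)
        (IntegrableOn.congr_fun integrableOn_zero
          (fun y hy => (h0 y (le_of_lt hy)).symm) measurableSet_Ioi),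
        Ioc_union_Ioi_eq_Ioi hM0.le]
    have hz : (∫ y in Ioi M, h y) = 0 := by
      rw [setIntegral_congr_fun measurableSet_Ioi
        (fun y (hy : y ∈ Ioi M) => h0 y (le_of_lt hy))]
      exact integral_zero _ _
    rw [hsplit2, hz, add_zero, intervalIntegral.integral_of_le hM0.le]
  -- integration by parts
  have hGgder : ∀ y, HasDerivAt (fun y' => G (g y')) (-(1 - F1 (g y)) * deriv g y) y := by
    intro y
    exact (hGder (g y)).comp y (hgd y)
  have hIBP : (∫ y in (0:ℝ)..M, G (g y) * deriv U y)
      = ∫ y in (0:ℝ)..M, (1 - F1 (g y)) * deriv g y * U y := by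
    have hu'c : Continuous (fun y => -(1 - F1 (g y)) * deriv g y) :=
      ((continuous_const.sub (hF1c.comp hgc)).neg).mul hg'c
    have h1 := intervalIntegral.integral_mul_deriv_eq_deriv_mul
      (u := fun y => G (g y)) (v := U) (u' := fun y => -(1 - F1 (g y)) * deriv g y)
      (v' := deriv U)
      (fun x _ => hGgder x) (fun x _ => ((hU.differentiable one_ne_zero) x).hasDerivAt)
      (hu'c.intervalIntegrable 0 M) (hU'c.intervalIntegrable 0 M)
    rw [h1, hU0, hUM M le_rfl, mul_zero, mul_zero, sub_zero, zero_sub,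
      ← intervalIntegral.integral_neg]
    apply intervalIntegral.integral_congr
    intro y _
    ring
  -- final assembly
  have hcont2 : Continuous (fun y => (1 - F1 (g y)) * deriv g y * U y) :=
    ((continuous_const.sub (hF1c.comp hgc)).mul hg'c).mul hUc
  have hGU'cont : Continuous (fun y => G (g y) * deriv U y) := (hGc.comp hgc).mul hU'c
  have htr1 : (∫ y in Ioi (0:ℝ), G (g y) * deriv U y)
      = ∫ y in (0:ℝ)..M, G (g y) * deriv U y :=
    htrunc _ hGU'cont (fun y hy => by rw [hU'M y hy, mul_zero])
  have htr2 : (∫ y in (0:ℝ)..M, (1 - F1 (g y)) * deriv g y * U y)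
      = ∫ y in Ioi (0:ℝ), (1 - F1 (g y)) * deriv g y * U y :=
    (htrunc _ hcont2 (fun y hy => by rw [hUM y hy, mul_zero])).symm
  have hint2 : IntegrableOn (fun y => (1 - F1 (g y)) * deriv g y * U y) (Ioi (0:ℝ)) := by
    refine (hcont2.integrable_of_hasCompactSupport ?_).integrableOn
    exact hUsupp.mul_left
  rw [hLHS1, hLHS2, htr1, hIBP, htr2, ← integral_sub hUint hint2]
  apply setIntegral_congr_fun measurableSet_Ioi
  intro y _
  simp only []
  rw [hF2 y]
  ring
end

section
/- Let F₁ and F₂ be continuous c.d.f.s on [0,∞) with continuous positive densities f₁ and f₂, let g : [0,∞) → [0,∞) be strictly increasing with F₁(g(y)) = F₂(y) for all y, and suppose q(y) = (1 − F₂(y)) f₁(y)/f₁(g(y)) is bounded and measurable. Let T₂ be a random variable with c.d.f. F₂ and E[T₂²] < ∞, and define Q(x) = ∫₀^x (1 − F₂(y)) f₁(y)/f₁(g(y)) dy. Then Var(Q(T₂)) = 2 ∫₀^∞ ((1 − F₂(y))²/f₁(g(y))) f₁(y) (∫₀^y (F₂(z)(1 − F₂(z))/f₁(g(z))) f₁(z)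 dz) dy. -/
open MeasureTheory ProbabilityTheory Set Filter
open scoped ENNReal

namespace VarQAux


lemma monoPrim (f : ℝ → ℝ) (hloc : ∀ b : ℝ, IntegrableOn f (Ioc 0 b) volume)
    (hnn : ∀ y ∈ Ioi (0:ℝ), 0 ≤ f y) :
    Monotone (fun x => ∫ z in Ioc (0:ℝ) x, f z) := by
  intro a b hab
  have h0 : (0 : ℝ → ℝ) ≤ᵐ[volume.restrict (Ioc (0:ℝ) b)] f :=
    (ae_restrict_iff' measurableSet_Ioc).2 (Eventually.of_forall fun z hz => hnn z hz.1)
  exact setIntegral_mono_set (hloc b) h0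
    (HasSubset.Subset.eventuallyLE (Ioc_subset_Ioc_right hab))

lemma swapE {Ω : Type*} [MeasurableSpace Ω] (μ : Measure Ω) [IsFiniteMeasure μ]
    (T2 : Ω → ℝ) (hT2 : Measurable T2) (H : ℝ → ℝ≥0∞) (hH : Measurable H) :
    ∫⁻ ω, (∫⁻ z in Ioc (0:ℝ) (T2 ω), H z) ∂μ
      = ∫⁻ y in Ioi (0:ℝ), H y * μ {ω | y ≤ T2 ω} := by
  have hD : MeasurableSet {p : Ω × ℝ | p.2 ≤ T2 p.1} :=
    measurableSet_le measurable_snd (hT2.comp measurable_fst)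
  have key : ∀ t : ℝ, (∫⁻ z in Ioc (0:ℝ) t, H z)
      = ∫⁻ y in Ioi (0:ℝ), (Iic t).indicator H y := by
    intro t
    rw [lintegral_indicator measurableSet_Iic, Measure.restrict_restrict measurableSet_Iic,
      inter_comm, Ioi_inter_Iic]
  have hmeas : Measurable (Function.uncurry fun (ω : Ω) (y : ℝ) =>
      H y * ({p : Ω × ℝ | p.2 ≤ T2 p.1}).indicator 1 (ω, y)) := by
    exact (hH.comp measurable_snd).mul (measurable_one.indicator hD)
  calc ∫⁻ ω, (∫⁻ z in Ioc (0:ℝ) (T2 ω), H z) ∂μ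
      = ∫⁻ ω, (∫⁻ y in Ioi (0:ℝ),
          H y * ({p : Ω × ℝ | p.2 ≤ T2 p.1}).indicator 1 (ω, y)) ∂μ := by
        refine lintegral_congr fun ω => ?_
        rw [key]
        refine lintegral_congr fun y => ?_
        by_cases h : y ≤ T2 ω <;> simp [Set.indicator, h]
    _ = ∫⁻ y in Ioi (0:ℝ), (∫⁻ ω,
          H y * ({p : Ω × ℝ | p.2 ≤ T2 p.1}).indicator 1 (ω, y) ∂μ) :=
        lintegral_lintegral_swap hmeas.aemeasurable
    _ = ∫⁻ y in Ioi (0:ℝ), H y * μ {ω | y ≤ T2 ω} := by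
        refine lintegral_congr fun y => ?_
        have hset : MeasurableSet {ω | y ≤ T2 ω} := measurableSet_le measurable_const hT2
        have : (fun ω => H y * ({p : Ω × ℝ | p.2 ≤ T2 p.1}).indicator 1 (ω, y))
            = fun ω => H y * ({ω | y ≤ T2 ω}).indicator 1 ω := by
          funext ω
          by_cases h : y ≤ T2 ω <;> simp [Set.indicator, h]
        rw [this, lintegral_const_mul _ (measurable_one.indicator hset),
          lintegral_indicator_one hset]


lemma sqPrim (f : ℝ → ℝ) (hf : Measurable f) (hnn : ∀ y ∈ Ioi (0:ℝ), 0 ≤ f y)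
    (hloc : ∀ b : ℝ, IntegrableOn f (Ioc 0 b) volume)
    (s : Set ℝ) (hs : MeasurableSet s) (hsub : s ⊆ Ioi 0)
    (hsint : ∀ y ∈ s, s ∩ Iic y = Ioc 0 y)
    (hint : IntegrableOn f s volume) :
    ((∫ y in s, f y) ^ 2 = 2 * ∫ y in s, f y * ∫ z in Ioc (0:ℝ) y, f z) ∧
      IntegrableOn (fun y => f y * ∫ z in Ioc (0:ℝ) y, f z) s volume := by
  set ν := volume.restrict s with hν
  set F : ℝ → ℝ≥0∞ := fun y => ENNReal.ofReal (f y) with hFdef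
  have hF : Measurable F := ENNReal.measurable_ofReal.comp hf
  set G : ℝ → ℝ := fun y => ∫ z in Ioc (0:ℝ) y, f z with hGdef
  have hGmono : Monotone G := by
    intro a b hab
    have h0 : (0 : ℝ → ℝ) ≤ᵐ[volume.restrict (Ioc (0:ℝ) b)] f :=
      (ae_restrict_iff' measurableSet_Ioc).2 (Eventually.of_forall fun z hz => hnn z hz.1)
    exact setIntegral_mono_set (hloc b) h0
      (HasSubset.Subset.eventuallyLE (Ioc_subset_Ioc_right hab))
  have hGmeas : Measurable G := hGmono.measurable
  have hGnn : ∀ y, 0 ≤ G y := fun y =>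
    setIntegral_nonneg measurableSet_Ioc fun z hz => hnn z hz.1
  have hGF : ∀ y, ENNReal.ofReal (G y) = ∫⁻ z in Ioc (0:ℝ) y, F z := by
    intro y
    refine ofReal_integral_eq_lintegral_ofReal (hloc y) ?_
    exact (ae_restrict_iff' measurableSet_Ioc).2 (Eventually.of_forall fun z hz => hnn z hz.1)
  set I := ∫⁻ y, F y ∂ν with hI
  have hInn : ∀ᵐ y ∂ν, ENNReal.ofReal (f y) = (‖f y‖₊ : ℝ≥0∞) := by
    refine (ae_restrict_iff' hs).2 (Eventually.of_forall fun y hy => ?_)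
    rw [show ((‖f y‖₊ : ℝ≥0∞)) = ENNReal.ofReal ‖f y‖ from (ofReal_norm _).symm, Real.norm_eq_abs, abs_of_nonneg (hnn y (hsub hy))]
  have hIfin : I ≠ ⊤ := by
    rw [hI, lintegral_congr_ae hInn]
    exact hint.2.ne
  -- key ENNReal identity
  set D := {p : ℝ × ℝ | p.2 ≤ p.1} with hD
  have hDm : MeasurableSet D := measurableSet_le measurable_snd measurable_fst
  set A := ∫⁻ y, F y * ENNReal.ofReal (G y) ∂ν with hA
  have innA : ∀ y ∈ s, (∫⁻ z, F y * F z * D.indicator 1 (y, z) ∂ν)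
      = F y * ENNReal.ofReal (G y) := by
    intro y hy
    have e1 : (fun z => F y * F z * D.indicator 1 (y, z))
        = fun z => F y * (Iic y).indicator F z := by
      funext z
      by_cases h : z ≤ y <;> simp [Set.indicator, hD, h, mul_assoc]
    rw [e1, lintegral_const_mul _ (hF.indicator measurableSet_Iic),
      lintegral_indicator measurableSet_Iic, hν, Measure.restrict_restrict measurableSet_Iic,
      inter_comm, hsint y hy, ← hGF]
  have innB : ∀ z ∈ s, (∫⁻ y, F y * F z * Dᶜ.indicator 1 (y, z) ∂ν)
      = F z * ENNReal.ofReal (G z) := by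
    intro z hz
    have e1 : (fun y => F y * F z * Dᶜ.indicator 1 (y, z))
        = fun y => F z * (Iio z).indicator F y := by
      funext y
      by_cases h : z ≤ y
      · simp [Set.indicator, hD, h, not_lt.2 h]
      · simp [Set.indicator, hD, h, lt_of_not_ge h, mul_comm]
    have hset : s ∩ Iio z = Ioo 0 z := by
      ext y
      have h1 := Set.ext_iff.1 (hsint z hz) y
      simp only [mem_inter_iff, mem_Iic, mem_Ioc, mem_Iio, mem_Ioo] at h1 ⊢
      constructor
      · rintro ⟨hys, hyz⟩
        have := (h1.1 ⟨hys, le_of_lt hyz⟩).1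
        exact ⟨this, hyz⟩
      · rintro ⟨h0y, hyz⟩
        exact ⟨(h1.2 ⟨h0y, le_of_lt hyz⟩).1, hyz⟩
    rw [e1, lintegral_const_mul _ (hF.indicator measurableSet_Iio),
      lintegral_indicator measurableSet_Iio, hν, Measure.restrict_restrict measurableSet_Iio,
      inter_comm, hset]
    rw [Measure.restrict_congr_set Ioo_ae_eq_Ioc, ← hGF]
  have hzmeas : ∀ y : ℝ, Measurable fun z : ℝ => F y * F z * Dᶜ.indicator 1 (y, z) := by
    intro y
    exact ((measurable_const.mul hF).mul
      ((measurable_one.indicator hDm.compl).comp measurable_prodMk_left))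
  -- split the double integral
  have hswap : (∫⁻ y, (∫⁻ z, F y * F z * Dᶜ.indicator 1 (y, z) ∂ν) ∂ν)
      = ∫⁻ z, (∫⁻ y, F y * F z * Dᶜ.indicator 1 (y, z) ∂ν) ∂ν := by
    refine lintegral_lintegral_swap ?_
    have : Measurable (Function.uncurry fun (y z : ℝ) => F y * F z * Dᶜ.indicator 1 (y, z)) :=
      ((hF.comp measurable_fst).mul (hF.comp measurable_snd)).mul
        (measurable_one.indicator hDm.compl)
    exact this.aemeasurable
  have KEY : I * I = 2 * A := by
    have step1 : I * I = ∫⁻ y, (∫⁻ z, F y * F z ∂ν) ∂ν := by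
      conv_lhs => rw [hI, ← lintegral_mul_const _ hF]
      refine lintegral_congr fun y => ?_
      rw [lintegral_const_mul _ hF, mul_comm]
    have step2 : ∀ y : ℝ, (∫⁻ z, F y * F z ∂ν)
        = (∫⁻ z, F y * F z * D.indicator 1 (y, z) ∂ν)
          + ∫⁻ z, F y * F z * Dᶜ.indicator 1 (y, z) ∂ν := by
      intro y
      rw [← lintegral_add_right _ (hzmeas y)]
      refine lintegral_congr fun z => ?_
      by_cases h : (y, z) ∈ D
      · have h2 : (y, z) ∉ Dᶜ := fun hc => hc h
        simp [Set.indicator, h, h2]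
      · simp [Set.indicator, h]
    have eqA : (∫⁻ y, (∫⁻ z, F y * F z * D.indicator 1 (y, z) ∂ν) ∂ν) = A := by
      rw [hA, hν]
      exact setLIntegral_congr_fun hs (fun y hy => innA y hy)
    have eqB : (∫⁻ y, (∫⁻ z, F y * F z * Dᶜ.indicator 1 (y, z) ∂ν) ∂ν) = A := by
      rw [hswap, hA, hν]
      exact setLIntegral_congr_fun hs (fun z hz => innB z hz)
    calc I * I = ∫⁻ y, (∫⁻ z, F y * F z ∂ν) ∂ν := step1
      _ = (∫⁻ y, (∫⁻ z, F y * F z * D.indicator 1 (y, z) ∂ν) ∂ν)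
          + ∫⁻ y, (∫⁻ z, F y * F z * Dᶜ.indicator 1 (y, z) ∂ν) ∂ν := by
          rw [← lintegral_add_right]
          · exact lintegral_congr fun y => step2 y
          · -- measurability of y ↦ inner integral
            exact (Measurable.lintegral_prod_right
              (((hF.comp measurable_fst).mul (hF.comp measurable_snd)).mul
                (measurable_one.indicator hDm.compl)))
      _ = A + A := by rw [eqA, eqB]
      _ = 2 * A := (two_mul A).symm
  -- convert to real
  have hofReal : ∀ᵐ y ∂ν, ENNReal.ofReal (f y * G y) = F y * ENNReal.ofReal (G y) := by
    refine (ae_restrict_iff' hs).2 (Eventually.of_forall fun y hy => ?_)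
    exact ENNReal.ofReal_mul (hnn y (hsub hy))
  have hAfin : A ≠ ⊤ := by
    intro hc
    have : I * I = ⊤ := by rw [KEY, hc, ENNReal.mul_top (by norm_num)]
    exact ENNReal.mul_ne_top hIfin hIfin this
  have hfGnn : ∀ᵐ y ∂ν, 0 ≤ f y * G y := by
    refine (ae_restrict_iff' hs).2 (Eventually.of_forall fun y hy => ?_)
    exact mul_nonneg (hnn y (hsub hy)) (hGnn y)
  have hfGmeas : AEStronglyMeasurable (fun y => f y * G y) ν :=
    (hf.mul hGmeas).aestronglyMeasurable
  have hlintfG : (∫⁻ y, ENNReal.ofReal (f y * G y) ∂ν) = A := by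
    rw [hA]; exact lintegral_congr_ae hofReal
  have hintfG : IntegrableOn (fun y => f y * G y) s volume := by
    refine ⟨hfGmeas, ?_⟩
    rw [hasFiniteIntegral_iff_ofReal hfGnn, hlintfG]
    exact hAfin.lt_top
  constructor
  · have e1 : ∫ y in s, f y = I.toReal := by
      rw [integral_eq_lintegral_of_nonneg_ae
        ((ae_restrict_iff' hs).2 (Eventually.of_forall fun y hy => hnn y (hsub hy)))
        hf.aestronglyMeasurable]
    have e2 : ∫ y in s, f y * G y = A.toReal := by
      rw [integral_eq_lintegral_of_nonneg_ae hfGnn hfGmeas, hlintfG]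
    rw [e1, e2, sq, ← ENNReal.toReal_mul, KEY, ENNReal.toReal_mul]
    norm_num
  · exact hintfG

lemma cdf_compl {Ω : Type*} [MeasurableSpace Ω] (μ : Measure Ω) [IsProbabilityMeasure μ]
    (T2 : Ω → ℝ) (hT2 : Measurable T2)
    (F2 : ℝ → ℝ) (hF2cont : Continuous F2)
    (hT2cdf : ∀ t, F2 t = (μ {ω | T2 ω ≤ t}).toReal) :
    ∀ y : ℝ, ENNReal.ofReal (1 - F2 y) = μ {ω | y ≤ T2 ω} := by
  intro y
  have hlt : (μ {ω | T2 ω < y}).toReal = F2 y := by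
    set s : ℕ → Set Ω := fun n => {ω | T2 ω ≤ y - 1 / (n + 1)} with hsdef
    have hmono : Monotone s := by
      intro n m hnm ω h
      have h1 : (1:ℝ) / (m + 1) ≤ 1 / (n + 1) := by
        apply one_div_le_one_div_of_le
        · positivity
        · have : (n:ℝ) ≤ m := Nat.cast_le.2 hnm
          linarith
      have h' : T2 ω ≤ y - 1 / (n + 1) := h
      show T2 ω ≤ y - 1 / (m + 1)
      linarith
    have hUnion : (⋃ n, s n) = {ω | T2 ω < y} := by
      ext ω
      simp only [hsdef, mem_iUnion, mem_setOf_eq]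
      constructor
      · rintro ⟨n, hn⟩
        have : (0:ℝ) < 1 / (n + 1) := by positivity
        linarith
      · intro h
        obtain ⟨n, hn⟩ := exists_nat_one_div_lt (sub_pos.2 h)
        exact ⟨n, by linarith⟩
    have t1 : Tendsto (fun n => μ (s n)) atTop (nhds (μ {ω | T2 ω < y})) := by
      have := tendsto_measure_iUnion_atTop (μ := μ) hmono
      rwa [hUnion] at this
    have t2 : Tendsto (fun n => (μ (s n)).toReal) atTop
        (nhds ((μ {ω | T2 ω < y}).toReal)) :=
      (ENNReal.tendsto_toReal (measure_ne_top μ _)).comp t1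
    have heq : (fun n : ℕ => (μ (s n)).toReal) = fun n : ℕ => F2 (y - 1 / (n + 1)) :=
      funext fun n => (hT2cdf _).symm
    have t3 : Tendsto (fun n : ℕ => F2 (y - 1 / (n + 1))) atTop (nhds (F2 y)) := by
      have harg : Tendsto (fun n : ℕ => y - 1 / ((n:ℝ) + 1)) atTop (nhds y) := by
        have h2 := (tendsto_const_nhds (α := ℕ) (x := y) (f := atTop)).sub
          tendsto_one_div_add_atTop_nhds_zero_nat
        simpa using h2
      exact (hF2cont.tendsto y).comp harg
    rw [heq] at t2
    exact tendsto_nhds_unique t2 t3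
  have hcompl : {ω | y ≤ T2 ω} = {ω | T2 ω < y}ᶜ := by
    ext ω; simp [not_lt]
  rw [hcompl, measure_compl (measurableSet_lt hT2 measurable_const) (measure_ne_top μ _),
    measure_univ, ← hlt, ENNReal.ofReal_sub _ ENNReal.toReal_nonneg, ENNReal.ofReal_one,
    ENNReal.ofReal_toReal (measure_ne_top μ _)]



lemma expPrim {Ω : Type*} [MeasurableSpace Ω] (μ : Measure Ω) [IsProbabilityMeasure μ]
    (T2 : Ω → ℝ) (hT2 : Measurable T2)
    (F2 : ℝ → ℝ) (hF2meas : Measurable F2) (hF2le1 : ∀ y, F2 y ≤ 1)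
    (hE : ∀ y : ℝ, ENNReal.ofReal (1 - F2 y) = μ {ω | y ≤ T2 ω})
    (h : ℝ → ℝ) (hh : Measurable h) (hnn : ∀ y ∈ Ioi (0:ℝ), 0 ≤ h y)
    (hloc : ∀ b : ℝ, IntegrableOn h (Ioc 0 b) volume)
    (hfin : (∫⁻ y in Ioi (0:ℝ), ENNReal.ofReal (h y) * μ {ω | y ≤ T2 ω}) ≠ ⊤) :
    ((∫ ω, (∫ z in Ioc (0:ℝ) (T2 ω), h z) ∂μ) = ∫ y in Ioi (0:ℝ), h y * (1 - F2 y)) ∧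
      IntegrableOn (fun y => h y * (1 - F2 y)) (Ioi (0:ℝ)) volume := by
  set H : ℝ → ℝ≥0∞ := fun y => ENNReal.ofReal (h y) with hHdef
  have hH : Measurable H := ENNReal.measurable_ofReal.comp hh
  have hswap := swapE μ T2 hT2 H hH
  have hnn' : ∀ t : ℝ, (0:ℝ→ℝ) ≤ᵐ[volume.restrict (Ioc (0:ℝ) t)] h :=
    fun t => (ae_restrict_iff' measurableSet_Ioc).2
      (Eventually.of_forall fun z hz => hnn z hz.1)
  have hinner : ∀ t : ℝ, ENNReal.ofReal (∫ z in Ioc (0:ℝ) t, h z)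
      = ∫⁻ z in Ioc (0:ℝ) t, H z := fun t =>
    ofReal_integral_eq_lintegral_ofReal (hloc t) (hnn' t)
  -- pointwise identity on Ioi 0
  have hpt : ∀ y ∈ Ioi (0:ℝ), ENNReal.ofReal (h y * (1 - F2 y)) = H y * μ {ω | y ≤ T2 ω} := by
    intro y hy
    rw [ENNReal.ofReal_mul (hnn y hy), hE y]
  have hk_meas : Measurable (fun y => h y * (1 - F2 y)) :=
    hh.mul (measurable_const.sub hF2meas)
  have hk_lint : (∫⁻ y in Ioi (0:ℝ), ENNReal.ofReal (h y * (1 - F2 y)))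
      = ∫⁻ y in Ioi (0:ℝ), H y * μ {ω | y ≤ T2 ω} :=
    setLIntegral_congr_fun measurableSet_Ioi hpt
  have hknn : (0:ℝ→ℝ) ≤ᵐ[volume.restrict (Ioi (0:ℝ))] fun y => h y * (1 - F2 y) := by
    refine (ae_restrict_iff' measurableSet_Ioi).2 (Eventually.of_forall fun y hy => ?_)
    exact mul_nonneg (hnn y hy) (by linarith [hF2le1 y])
  have hGmono : Monotone (fun x => ∫ z in Ioc (0:ℝ) x, h z) := by
    intro a b hab
    exact setIntegral_mono_set (hloc b) (hnn' b)
      (HasSubset.Subset.eventuallyLE (Ioc_subset_Ioc_right hab))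
  have hgmeas : Measurable fun ω => ∫ z in Ioc (0:ℝ) (T2 ω), h z :=
    hGmono.measurable.comp hT2
  constructor
  · rw [integral_eq_lintegral_of_nonneg_ae
      (Eventually.of_forall fun ω => setIntegral_nonneg measurableSet_Ioc
        fun z hz => hnn z hz.1)
      hgmeas.aestronglyMeasurable,
      integral_eq_lintegral_of_nonneg_ae hknn hk_meas.aestronglyMeasurable]
    congr 1
    rw [hk_lint, ← hswap]
    exact lintegral_congr fun ω => hinner (T2 ω)
  · refine ⟨hk_meas.aestronglyMeasurable, ?_⟩
    rw [hasFiniteIntegral_iff_ofReal hknn, hk_lint]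
    exact hfin.lt_top

end VarQAux


/-- Variance of `Q(T₂)` in Theorem 2 of the paper:
`Var(Q(T₂)) = 2 ∫₀^∞ ((1−F₂(y))²/f₁(g(y))) f₁(y) (∫₀^y (F₂(z)(1−F₂(z))/f₁(g(z))) f₁(z) dz) dy`,
where `Q(x) = ∫₀^x (1−F₂(y)) f₁(y)/f₁(g(y)) dy` and `g` is the equivalent-time
function with `F₁(g(y)) = F₂(y)`. -/
theorem variance_Q_identity
    {Ω : Type*} [MeasurableSpace Ω] (μ : Measure Ω) [IsProbabilityMeasure μ]
    (f1 f2 : ℝ → ℝ) (hf1c : Continuous f1) (hf2c : Continuous f2)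
    (hf1pos : ∀ u > (0:ℝ), 0 < f1 u) (hf2pos : ∀ u > (0:ℝ), 0 < f2 u)
    (hf1nn : ∀ u, 0 ≤ f1 u) (hf2nn : ∀ u, 0 ≤ f2 u)
    (F1 F2 : ℝ → ℝ)
    (hF1 : ∀ t, F1 t = ∫ u in (0:ℝ)..t, f1 u)
    (hF2 : ∀ t, F2 t = ∫ u in (0:ℝ)..t, f2 u)
    (hf1norm : ∫ u in Ioi (0:ℝ), f1 u = 1) (hf2norm : ∫ u in Ioi (0:ℝ), f2 u = 1)
    (g : ℝ → ℝ) (hgmono : StrictMonoOn g (Ici (0:ℝ))) (hgmeas : Measurable g)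
    (hgequiv : ∀ y ≥ (0:ℝ), F1 (g y) = F2 y)
    (hqmeas : Measurable fun y => (1 - F2 y) * f1 y / f1 (g y))
    (C : ℝ) (hqbd : ∀ y ≥ (0:ℝ), |(1 - F2 y) * f1 y / f1 (g y)| ≤ C)
    (T2 : Ω → ℝ) (hT2meas : Measurable T2) (hT2nn : ∀ ω, 0 ≤ T2 ω)
    (hT2cdf : ∀ t, F2 t = (μ {ω | T2 ω ≤ t}).toReal)
    (hT2sq : Integrable (fun ω => (T2 ω) ^ 2) μ)
    (Q : ℝ → ℝ) (hQ : ∀ x, Q x = ∫ y in (0:ℝ)..x, (1 - F2 y) * f1 y / f1 (g y)) :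
    variance (fun ω => Q (T2 ω)) μ
      = 2 * ∫ y in Ioi (0:ℝ), ((1 - F2 y) ^ 2 / f1 (g y)) * f1 y
          * (∫ z in (0:ℝ)..y, (F2 z * (1 - F2 z) / f1 (g z)) * f1 z) := by
  set q : ℝ → ℝ := fun y => (1 - F2 y) * f1 y / f1 (g y) with hqdef
  have hqd : ∀ y, q y = (1 - F2 y) * f1 y / f1 (g y) := fun y => rfl
  -- basic cdf facts
  have hF2cont : Continuous F2 := by
    have hfe : F2 = fun t => ∫ u in (0:ℝ)..t, f2 u := funext hF2
    rw [hfe]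
    exact intervalIntegral.continuous_primitive (fun a b => hf2c.intervalIntegrable a b) 0
  have hE : ∀ y : ℝ, ENNReal.ofReal (1 - F2 y) = μ {ω | y ≤ T2 ω} :=
    VarQAux.cdf_compl μ T2 hT2meas F2 hF2cont hT2cdf
  have hF2meas : Measurable F2 := hF2cont.measurable
  have hF2le1 : ∀ y, F2 y ≤ 1 := by
    intro y
    rw [hT2cdf y]
    calc (μ {ω | T2 ω ≤ y}).toReal ≤ (1:ℝ≥0∞).toReal :=
          ENNReal.toReal_mono ENNReal.one_ne_top prob_le_one
      _ = 1 := ENNReal.toReal_one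
  have hqnn : ∀ y, 0 ≤ q y := fun y =>
    div_nonneg (mul_nonneg (by linarith [hF2le1 y]) (hf1nn y)) (hf1nn _)
  have hC0 : 0 ≤ C := le_trans (abs_nonneg _) (hqbd 0 le_rfl)
  have hqbd' : ∀ y : ℝ, 0 ≤ y → q y ≤ C := fun y hy =>
    le_trans (le_abs_self _) (hqbd y hy)
  have hqloc : ∀ b : ℝ, IntegrableOn q (Ioc 0 b) volume := by
    intro b
    refine Measure.integrableOn_of_bounded (M := C) measure_Ioc_lt_top.ne
      hqmeas.aestronglyMeasurable ?_
    refine (ae_restrict_iff' measurableSet_Ioc).2 (Eventually.of_forall fun y hy => ?_)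
    rw [Real.norm_eq_abs]
    exact hqbd y (le_of_lt hy.1)
  -- the primitive Qc of q
  have hQcmono : Monotone (fun x => ∫ z in Ioc (0:ℝ) x, q z) :=
    VarQAux.monoPrim q hqloc (fun y _ => hqnn y)
  have hQcmeas : Measurable (fun x => ∫ z in Ioc (0:ℝ) x, q z) := hQcmono.measurable
  have hQcnn : ∀ x : ℝ, 0 ≤ ∫ z in Ioc (0:ℝ) x, q z := fun x =>
    setIntegral_nonneg measurableSet_Ioc fun z _ => hqnn z
  have hQcbd : ∀ x : ℝ, 0 ≤ x → (∫ z in Ioc (0:ℝ) x, q z) ≤ C * x := by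
    intro x hx
    have hb := norm_setIntegral_le_of_norm_le_const (μ := volume) (s := Ioc (0:ℝ) x)
      (f := q) (C := C) measure_Ioc_lt_top
      (fun y hy => by rw [Real.norm_eq_abs]; exact hqbd y (le_of_lt hy.1))
    rw [Real.volume_real_Ioc_of_le hx, sub_zero, Real.norm_eq_abs] at hb
    exact le_trans (le_abs_self _) hb
  have hQQc : (fun ω => Q (T2 ω)) = fun ω => ∫ z in Ioc (0:ℝ) (T2 ω), q z := by
    funext ω
    rw [hQ, intervalIntegral.integral_of_le (hT2nn ω)]
  -- tail measure is antitone hence measurable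
  have hμmeas : Measurable fun y : ℝ => μ {ω | y ≤ T2 ω} :=
    Antitone.measurable fun a b hab => measure_mono fun ω h => le_trans hab h
  -- integrability of T2 and finiteness facts
  have hT2int : Integrable T2 μ := by
    refine Integrable.mono (hT2sq.add (integrable_const 1)) hT2meas.aestronglyMeasurable
      (Eventually.of_forall fun ω => ?_)
    have h2 : ‖T2 ω‖ ≤ ‖T2 ω ^ 2 + 1‖ := by
      rw [Real.norm_eq_abs, Real.norm_eq_abs, abs_of_nonneg (hT2nn ω),
        abs_of_nonneg (by positivity : (0:ℝ) ≤ T2 ω ^ 2 + 1)]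
      nlinarith [hT2nn ω]
    simpa using h2
  have hT2lint : (∫⁻ ω, ENNReal.ofReal (T2 ω) ∂μ) ≠ ⊤ := by
    have he : ∀ ω, ENNReal.ofReal (T2 ω) = (‖T2 ω‖₊ : ℝ≥0∞) := fun ω => by
      rw [show ((‖T2 ω‖₊ : ℝ≥0∞)) = ENNReal.ofReal ‖T2 ω‖ from (ofReal_norm _).symm, Real.norm_eq_abs, abs_of_nonneg (hT2nn ω)]
    rw [lintegral_congr he]
    exact hT2int.2.ne
  have hT2sqlint : (∫⁻ ω, ENNReal.ofReal (T2 ω ^ 2) ∂μ) ≠ ⊤ := by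
    have he : ∀ ω, ENNReal.ofReal (T2 ω ^ 2) = (‖T2 ω ^ 2‖₊ : ℝ≥0∞) := fun ω => by
      rw [show ((‖T2 ω ^ 2‖₊ : ℝ≥0∞)) = ENNReal.ofReal ‖T2 ω ^ 2‖ from (ofReal_norm _).symm, Real.norm_eq_abs,
        abs_of_nonneg (by positivity : (0:ℝ) ≤ T2 ω ^ 2)]
    rw [lintegral_congr he]
    exact hT2sq.2.ne
  have FIN1 : (∫⁻ y in Ioi (0:ℝ), μ {ω | y ≤ T2 ω}) ≠ ⊤ := by
    have h1 := VarQAux.swapE μ T2 hT2meas (fun _ => 1) measurable_const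
    simp only [one_mul] at h1
    rw [← h1]
    have h2 : ∀ ω, (∫⁻ _z in Ioc (0:ℝ) (T2 ω), (1:ℝ≥0∞)) = ENNReal.ofReal (T2 ω) := by
      intro ω
      rw [setLIntegral_one, Real.volume_Ioc, sub_zero]
    rw [lintegral_congr h2]
    exact hT2lint
  have FIN2 : (∫⁻ y in Ioi (0:ℝ), ENNReal.ofReal y * μ {ω | y ≤ T2 ω}) ≠ ⊤ := by
    have h1 := VarQAux.swapE μ T2 hT2meas (fun y => ENNReal.ofReal y) ENNReal.measurable_ofReal
    rw [← lt_top_iff_ne_top, ← h1]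
    have h2 : ∀ ω, (∫⁻ z in Ioc (0:ℝ) (T2 ω), ENNReal.ofReal z) ≤ ENNReal.ofReal (T2 ω ^ 2) := by
      intro ω
      calc ∫⁻ z in Ioc (0:ℝ) (T2 ω), ENNReal.ofReal z
          ≤ ∫⁻ _z in Ioc (0:ℝ) (T2 ω), ENNReal.ofReal (T2 ω) :=
            lintegral_mono_ae ((ae_restrict_iff' measurableSet_Ioc).2
              (Eventually.of_forall fun z hz => ENNReal.ofReal_le_ofReal hz.2))
        _ = ENNReal.ofReal (T2 ω) * ENNReal.ofReal (T2 ω) := by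
            rw [setLIntegral_const, Real.volume_Ioc, sub_zero]
        _ = ENNReal.ofReal (T2 ω ^ 2) := by
            rw [← ENNReal.ofReal_mul (hT2nn ω), sq]
    exact lt_of_le_of_lt (lintegral_mono h2) (lt_top_iff_ne_top.2 hT2sqlint)
  -- finiteness for h = q
  have hfinq : (∫⁻ y in Ioi (0:ℝ), ENNReal.ofReal (q y) * μ {ω | y ≤ T2 ω}) ≠ ⊤ := by
    refine ne_top_of_le_ne_top (ENNReal.mul_ne_top (ENNReal.ofReal_ne_top (r := C)) FIN1) ?_
    rw [← lintegral_const_mul _ hμmeas]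
    refine lintegral_mono_ae ((ae_restrict_iff' measurableSet_Ioi).2
      (Eventually.of_forall fun y hy => ?_))
    exact mul_le_mul_left (ENNReal.ofReal_le_ofReal (hqbd' y (le_of_lt hy))) _
  -- finiteness for h = q * Qc
  have hfinA1 : (∫⁻ y in Ioi (0:ℝ),
      ENNReal.ofReal (q y * ∫ z in Ioc (0:ℝ) y, q z) * μ {ω | y ≤ T2 ω}) ≠ ⊤ := by
    refine ne_top_of_le_ne_top (ENNReal.mul_ne_top (ENNReal.ofReal_ne_top (r := C * C)) FIN2) ?_
    rw [← lintegral_const_mul _ (f := fun y : ℝ => ENNReal.ofReal y * μ {ω | y ≤ T2 ω})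
      (ENNReal.measurable_ofReal.mul hμmeas)]
    refine lintegral_mono_ae ((ae_restrict_iff' measurableSet_Ioi).2
      (Eventually.of_forall fun y hy => ?_))
    have hb : q y * (∫ z in Ioc (0:ℝ) y, q z) ≤ (C * C) * y := by
      calc q y * (∫ z in Ioc (0:ℝ) y, q z) ≤ C * (C * y) :=
            mul_le_mul (hqbd' y (le_of_lt hy)) (hQcbd y (le_of_lt hy)) (hQcnn y) hC0
        _ = (C * C) * y := by ring
    calc ENNReal.ofReal (q y * ∫ z in Ioc (0:ℝ) y, q z) * μ {ω | y ≤ T2 ω}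
        ≤ ENNReal.ofReal ((C * C) * y) * μ {ω | y ≤ T2 ω} :=
          mul_le_mul_left (ENNReal.ofReal_le_ofReal hb) _
      _ = ENNReal.ofReal (C * C) * (ENNReal.ofReal y * μ {ω | y ≤ T2 ω}) := by
          rw [ENNReal.ofReal_mul (by positivity), mul_assoc]
  -- locality for h = q * Qc
  have hA1loc : ∀ b : ℝ, IntegrableOn (fun y => q y * ∫ z in Ioc (0:ℝ) y, q z)
      (Ioc 0 b) volume := by
    intro b
    refine Measure.integrableOn_of_bounded (M := C * (C * b)) measure_Ioc_lt_top.ne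
      (hqmeas.mul hQcmeas).aestronglyMeasurable ?_
    refine (ae_restrict_iff' measurableSet_Ioc).2 (Eventually.of_forall fun y hy => ?_)
    rw [Real.norm_eq_abs, abs_of_nonneg (mul_nonneg (hqnn y) (hQcnn y))]
    have h1 : (∫ z in Ioc (0:ℝ) y, q z) ≤ C * b :=
      le_trans (hQcbd y (le_of_lt hy.1)) (mul_le_mul_of_nonneg_left hy.2 hC0)
    exact mul_le_mul (hqbd' y (le_of_lt hy.1)) h1
      (hQcnn y) hC0
  -- the two expectation computations
  have mq := VarQAux.expPrim μ T2 hT2meas F2 hF2meas hF2le1 hE q hqmeas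
    (fun y _ => hqnn y) hqloc hfinq
  have A1 := VarQAux.expPrim μ T2 hT2meas F2 hF2meas hF2le1 hE
    (fun y => q y * ∫ z in Ioc (0:ℝ) y, q z) (hqmeas.mul hQcmeas)
    (fun y _ => mul_nonneg (hqnn y) (hQcnn y)) hA1loc hfinA1
  -- fq := q * (1 - F2)
  have hfqmeas : Measurable (fun y => q y * (1 - F2 y)) :=
    hqmeas.mul (measurable_const.sub hF2meas)
  have hfqnn : ∀ y ∈ Ioi (0:ℝ), 0 ≤ q y * (1 - F2 y) := fun y _ =>
    mul_nonneg (hqnn y) (by linarith [hF2le1 y])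
  have hfqloc : ∀ b : ℝ, IntegrableOn (fun y => q y * (1 - F2 y)) (Ioc 0 b) volume := by
    intro b
    refine Measure.integrableOn_of_bounded (M := C) measure_Ioc_lt_top.ne
      hfqmeas.aestronglyMeasurable ?_
    refine (ae_restrict_iff' measurableSet_Ioc).2 (Eventually.of_forall fun y hy => ?_)
    rw [Real.norm_eq_abs, abs_of_nonneg (hfqnn y hy.1)]
    calc q y * (1 - F2 y) ≤ q y * 1 := by
          have := hT2cdf y
          refine mul_le_mul_of_nonneg_left ?_ (hqnn y)
          have : (0:ℝ) ≤ F2 y := by rw [hT2cdf y]; exact ENNReal.toReal_nonneg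
          linarith
      _ = q y := mul_one _
      _ ≤ C := hqbd' y (le_of_lt hy.1)
  -- squared mean
  have sqm := VarQAux.sqPrim (fun y => q y * (1 - F2 y)) hfqmeas hfqnn hfqloc
    (Ioi 0) measurableSet_Ioi (fun x hx => hx) (fun y _ => Ioi_inter_Iic) mq.2
  -- pointwise square of the primitive
  have hsq : ∀ ω, (∫ z in Ioc (0:ℝ) (T2 ω), q z) ^ 2
      = 2 * ∫ y in Ioc (0:ℝ) (T2 ω), q y * ∫ z in Ioc (0:ℝ) y, q z := by
    intro ω
    refine (VarQAux.sqPrim q hqmeas (fun y _ => hqnn y) hqloc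
      (Ioc 0 (T2 ω)) measurableSet_Ioc Ioc_subset_Ioi_self ?_ (hqloc _)).1
    intro y hy
    rw [Ioc_inter_Iic, inf_eq_right.2 hy.2]
  -- Memℒp and variance formula
  have hX2 : MemLp (fun ω => Q (T2 ω)) 2 μ := by
    rw [hQQc]
    have hT2L2 : MemLp T2 2 μ :=
      (memLp_two_iff_integrable_sq hT2meas.aestronglyMeasurable).2 hT2sq
    refine MemLp.of_le (hT2L2.const_mul C) (hQcmeas.comp hT2meas).aestronglyMeasurable
      (Eventually.of_forall fun ω => ?_)
    rw [Real.norm_eq_abs, Real.norm_eq_abs, abs_of_nonneg (hQcnn _)]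
    exact le_trans (hQcbd _ (hT2nn ω)) (le_abs_self _)
  rw [variance_eq_sub hX2]
  -- compute the second moment
  have hXsq : (∫ x, ((fun ω => Q (T2 ω)) ^ 2) x ∂μ)
      = 2 * ∫ y in Ioi (0:ℝ), (q y * ∫ z in Ioc (0:ℝ) y, q z) * (1 - F2 y) := by
    have he : (fun x => ((fun ω => Q (T2 ω)) ^ 2) x)
        = fun x => 2 * ∫ y in Ioc (0:ℝ) (T2 x), q y * ∫ z in Ioc (0:ℝ) y, q z := by
      funext x
      simp only [Pi.pow_apply]
      rw [congrFun hQQc x]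
      exact hsq x
    rw [he, integral_const_mul, A1.1]
  -- compute the mean
  have hXm : (∫ x, Q (T2 x) ∂μ) = ∫ y in Ioi (0:ℝ), q y * (1 - F2 y) := by
    have he : (fun x => Q (T2 x)) = fun x => ∫ z in Ioc (0:ℝ) (T2 x), q z := hQQc
    rw [he]
    exact mq.1
  rw [hXsq, hXm, sqm.1]
  -- combine the two integrals
  rw [← mul_sub]
  congr 1
  rw [← integral_sub A1.2 sqm.2]
  refine setIntegral_congr_fun measurableSet_Ioi fun y hy => ?_
  have hy' : (0:ℝ) < y := hy
  -- inner integral difference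
  have hinner : (∫ z in Ioc (0:ℝ) y, q z) - (∫ z in Ioc (0:ℝ) y, q z * (1 - F2 z))
      = ∫ z in Ioc (0:ℝ) y, q z * F2 z := by
    rw [← integral_sub (hqloc y) (hfqloc y)]
    refine setIntegral_congr_fun measurableSet_Ioc fun z _ => ?_
    simp only [hqd]
    ring
  have hio : (∫ z in (0:ℝ)..y, (F2 z * (1 - F2 z) / f1 (g z)) * f1 z)
      = ∫ z in Ioc (0:ℝ) y, q z * F2 z := by
    rw [intervalIntegral.integral_of_le (le_of_lt hy')]
    refine setIntegral_congr_fun measurableSet_Ioc fun z _ => ?_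
    simp only [hqd]
    ring
  rw [hio, ← hinner]
  simp only [hqd]
  ring
end
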